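/- Let H ≥ 1 be an integer. For each h ∈ {1, …, H} let Â_h, F_h : E → E with Â_h ρ_h-Lipschitz and F_h θ_h-Lipschitz (ρ_h, θ_h > 0), and for each h ∈ {1, …, H−1} let A_h : E → E satisfy ‖A_h X − Â_h X‖_F ≤ σ_h for all X ∈ E (σ_h ≥ 0). Given X_1, X̌_1 ∈ E, define recursively X_{h+1} = X_h + A_h(X_h) + F_h(X_h + A_h(X_h)) for h = 1, …, H−1, X_{H+1} = X_H + Â_H(X_H) + F_H(X_H + Â_H(X_H)), and X̌_{h+1} = X̌_h + Â_h(X̌_h) + F_h(X̌_h + Â_h(X̌_h)) for h = 1, …, H. Then ‖X_{H+1} − X̌_{H+1}‖_F ≤ (∏_{i=1}^{H} (1+θ_i)(1+ρ_i))·‖X_1 − X̌_1‖_F + Σ_{h=1}^{H−1} (1+θ_h)·σ_h·∏_{i=h+1}^{H} (1+θ_i)(1+ρ_i). (Lemma 1 of the paper: per-communication-round deviation bound when the H-th forward performs global self-attention.) -/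

import Mathlib

/-!
Statement 1 (Lemma 1 of the paper): per-communication-round deviation bound.
The FedAttn trajectory `X` uses local attention operators `A h` for the first
`H − 1` forwards and the global operator `Ahat H` at the `H`-th forward, while
the centralized trajectory `Xc` uses `Ahat h` at every forward.
`E` is the space of real `L × d` matrices with the Frobenius norm.
-/

attribute [local instance] Matrix.frobeniusNormedAddCommGroup

theorem fedattn_round_deviation
    (L d : ℕ) (hL : 0 < L) (hd : 0 < d) (H : ℕ) (hH : 1 ≤ H)
    (A Ahat F : ℕ → Matrix (Fin L) (Fin d) ℝ → Matrix (Fin L) (Fin d) ℝ)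
    (ρ θ σ : ℕ → ℝ)
    (hρ : ∀ h ∈ Finset.Icc 1 H, 0 < ρ h)
    (hθ : ∀ h ∈ Finset.Icc 1 H, 0 < θ h)
    (hσ : ∀ h ∈ Finset.Icc 1 (H - 1), 0 ≤ σ h)
    (hAhat : ∀ h ∈ Finset.Icc 1 H, ∀ X Y, ‖Ahat h X - Ahat h Y‖ ≤ ρ h * ‖X - Y‖)
    (hF : ∀ h ∈ Finset.Icc 1 H, ∀ X Y, ‖F h X - F h Y‖ ≤ θ h * ‖X - Y‖)
    (hdev : ∀ h ∈ Finset.Icc 1 (H - 1), ∀ X, ‖A h X - Ahat h X‖ ≤ σ h)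
    (X Xc : ℕ → Matrix (Fin L) (Fin d) ℝ)
    (hXloc : ∀ h ∈ Finset.Icc 1 (H - 1),
      X (h + 1) = X h + A h (X h) + F h (X h + A h (X h)))
    (hXglob : X (H + 1) = X H + Ahat H (X H) + F H (X H + Ahat H (X H)))
    (hXc : ∀ h ∈ Finset.Icc 1 H,
      Xc (h + 1) = Xc h + Ahat h (Xc h) + F h (Xc h + Ahat h (Xc h))) :
    ‖X (H + 1) - Xc (H + 1)‖ ≤
      (∏ i ∈ Finset.Icc 1 H, (1 + θ i) * (1 + ρ i)) * ‖X 1 - Xc 1‖ +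
        ∑ h ∈ Finset.Icc 1 (H - 1),
          (1 + θ h) * σ h * ∏ i ∈ Finset.Icc (h + 1) H, (1 + θ i) * (1 + ρ i) := by
  set c : ℕ → ℝ := fun i => (1 + θ i) * (1 + ρ i) with hc
  -- generic single-step bound
  have step : ∀ (G Gh Fh : Matrix (Fin L) (Fin d) ℝ → Matrix (Fin L) (Fin d) ℝ) (r t s : ℝ) (Xh Xch : Matrix (Fin L) (Fin d) ℝ),
      0 ≤ t →
      (∀ Y Z, ‖Gh Y - Gh Z‖ ≤ r * ‖Y - Z‖) →
      (∀ Y Z, ‖Fh Y - Fh Z‖ ≤ t * ‖Y - Z‖) →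
      ‖G Xh - Gh Xh‖ ≤ s →
      ‖(Xh + G Xh + Fh (Xh + G Xh)) - (Xch + Gh Xch + Fh (Xch + Gh Xch))‖ ≤
        (1 + t) * (1 + r) * ‖Xh - Xch‖ + (1 + t) * s := by
    intro G Gh Fh r t s Xh Xch ht hGh hFh hGs
    set u := Xh + G Xh
    set v := Xch + Gh Xch
    have hT : ‖G Xh - Gh Xch‖ ≤ s + r * ‖Xh - Xch‖ := by
      have e1 : G Xh - Gh Xch = (G Xh - Gh Xh) + (Gh Xh - Gh Xch) := by abel
      calc ‖G Xh - Gh Xch‖ = ‖(G Xh - Gh Xh) + (Gh Xh - Gh Xch)‖ := by rw [e1]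
        _ ≤ ‖G Xh - Gh Xh‖ + ‖Gh Xh - Gh Xch‖ := norm_add_le _ _
        _ ≤ s + r * ‖Xh - Xch‖ := add_le_add hGs (hGh _ _)
    have huv : ‖u - v‖ ≤ ‖Xh - Xch‖ + ‖G Xh - Gh Xch‖ := by
      have e2 : u - v = (Xh - Xch) + (G Xh - Gh Xch) := by simp [u, v]; abel
      rw [e2]; exact norm_add_le _ _
    have hFd : ‖Fh u - Fh v‖ ≤ t * ‖u - v‖ := hFh _ _
    have e3 : (Xh + G Xh + Fh u) - (Xch + Gh Xch + Fh v)
        = ((Xh - Xch) + (G Xh - Gh Xch)) + (Fh u - Fh v) := by abel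
    calc ‖(Xh + G Xh + Fh u) - (Xch + Gh Xch + Fh v)‖
        = ‖((Xh - Xch) + (G Xh - Gh Xch)) + (Fh u - Fh v)‖ := by rw [e3]
      _ ≤ ‖(Xh - Xch) + (G Xh - Gh Xch)‖ + ‖Fh u - Fh v‖ := norm_add_le _ _
      _ ≤ (‖Xh - Xch‖ + ‖G Xh - Gh Xch‖) + t * ‖u - v‖ :=
          add_le_add (norm_add_le _ _) hFd
      _ ≤ (1 + t) * (1 + r) * ‖Xh - Xch‖ + (1 + t) * s := by
          have h1 := huv
          have h2 := hT
          nlinarith [norm_nonneg (Xh - Xch), norm_nonneg (u - v),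
            norm_nonneg (G Xh - Gh Xch)]
  have cpos : ∀ i ∈ Finset.Icc 1 H, (0:ℝ) ≤ c i := by
    intro i hi
    have := (hρ i hi).le
    have := (hθ i hi).le
    simp only [hc]; nlinarith
  -- main induction up to H
  have main : ∀ m, m ≤ H - 1 →
      ‖X (m + 1) - Xc (m + 1)‖ ≤
        (∏ i ∈ Finset.Icc 1 m, c i) * ‖X 1 - Xc 1‖ +
          ∑ k ∈ Finset.Icc 1 m, (1 + θ k) * σ k * ∏ i ∈ Finset.Icc (k + 1) m, c i := by
    intro m
    induction m with
    | zero => intro _; simp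
    | succ n ih =>
      intro hn
      have hn' : n ≤ H - 1 := Nat.le_of_succ_le hn
      have IH := ih hn'
      have hmem1 : n + 1 ∈ Finset.Icc 1 (H - 1) := by
        simp [Nat.succ_le_iff]; omega
      have hmemH : n + 1 ∈ Finset.Icc 1 H := by
        simp [Nat.succ_le_iff]; omega
      have hstep :
          ‖X (n + 1 + 1) - Xc (n + 1 + 1)‖ ≤
            c (n + 1) * ‖X (n + 1) - Xc (n + 1)‖ + (1 + θ (n + 1)) * σ (n + 1) := by
        rw [hXloc _ hmem1, hXc _ hmemH]
        exact step (A (n+1)) (Ahat (n+1)) (F (n+1)) (ρ (n+1)) (θ (n+1)) (σ (n+1))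
          (X (n+1)) (Xc (n+1)) (hθ _ hmemH).le (hAhat _ hmemH) (hF _ hmemH)
          (hdev _ hmem1 _)
      have hcnn : (0:ℝ) ≤ c (n + 1) := cpos _ hmemH
      have hprod : (∏ i ∈ Finset.Icc 1 (n + 1), c i)
          = (∏ i ∈ Finset.Icc 1 n, c i) * c (n + 1) :=
        Finset.prod_Icc_succ_top (Nat.le_add_left 1 n) _
      have hsum : (∑ k ∈ Finset.Icc 1 (n + 1),
            (1 + θ k) * σ k * ∏ i ∈ Finset.Icc (k + 1) (n + 1), c i)
          = (∑ k ∈ Finset.Icc 1 n,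
              (1 + θ k) * σ k * (∏ i ∈ Finset.Icc (k + 1) n, c i) * c (n + 1))
            + (1 + θ (n + 1)) * σ (n + 1) := by
        rw [Finset.sum_Icc_succ_top (Nat.le_add_left 1 n)]
        congr 1
        · apply Finset.sum_congr rfl
          intro k hk
          have hk' : k ≤ n := (Finset.mem_Icc.mp hk).2
          rw [Finset.prod_Icc_succ_top (by omega : k + 1 ≤ n + 1)]
          ring
        · rw [Finset.Icc_eq_empty (by omega : ¬ (n + 1 + 1 ≤ n + 1))]
          simp
      calc ‖X (n + 1 + 1) - Xc (n + 1 + 1)‖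
          ≤ c (n + 1) * ‖X (n + 1) - Xc (n + 1)‖ + (1 + θ (n + 1)) * σ (n + 1) := hstep
        _ ≤ c (n + 1) * ((∏ i ∈ Finset.Icc 1 n, c i) * ‖X 1 - Xc 1‖ +
              ∑ k ∈ Finset.Icc 1 n, (1 + θ k) * σ k * ∏ i ∈ Finset.Icc (k + 1) n, c i)
              + (1 + θ (n + 1)) * σ (n + 1) := by
            have := mul_le_mul_of_nonneg_left IH hcnn
            linarith
        _ = (∏ i ∈ Finset.Icc 1 (n + 1), c i) * ‖X 1 - Xc 1‖ +
              ∑ k ∈ Finset.Icc 1 (n + 1),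
                (1 + θ k) * σ k * ∏ i ∈ Finset.Icc (k + 1) (n + 1), c i := by
            have hs2 : (∑ k ∈ Finset.Icc 1 n,
                ((1 + θ k) * σ k * ∏ i ∈ Finset.Icc (k + 1) n, c i) * c (n + 1))
                = c (n + 1) * ∑ k ∈ Finset.Icc 1 n,
                    (1 + θ k) * σ k * ∏ i ∈ Finset.Icc (k + 1) n, c i := by
              rw [Finset.mul_sum]
              exact Finset.sum_congr rfl (fun k _ => by ring)
            rw [hprod, hsum, hs2]; ring
  -- global step
  have hHmem : H ∈ Finset.Icc 1 H := by simp [hH]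
  have hglob : ‖X (H + 1) - Xc (H + 1)‖ ≤ c H * ‖X H - Xc H‖ := by
    have := step (Ahat H) (Ahat H) (F H) (ρ H) (θ H) 0 (X H) (Xc H)
      (hθ _ hHmem).le (hAhat _ hHmem) (hF _ hHmem) (by simp)
    rw [hXglob, hXc _ hHmem]
    simpa using this
  have hH1 : H - 1 + 1 = H := Nat.succ_pred_eq_of_pos hH
  have hmain := main (H - 1) le_rfl
  rw [hH1] at hmain
  have hcH : (0:ℝ) ≤ c H := cpos _ hHmem
  have final : c H * ((∏ i ∈ Finset.Icc 1 (H - 1), c i) * ‖X 1 - Xc 1‖ +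
      ∑ k ∈ Finset.Icc 1 (H - 1), (1 + θ k) * σ k * ∏ i ∈ Finset.Icc (k + 1) (H - 1), c i)
      = (∏ i ∈ Finset.Icc 1 H, c i) * ‖X 1 - Xc 1‖ +
        ∑ k ∈ Finset.Icc 1 (H - 1),
          (1 + θ k) * σ k * ∏ i ∈ Finset.Icc (k + 1) H, c i := by
    have hp : (∏ i ∈ Finset.Icc 1 H, c i)
        = (∏ i ∈ Finset.Icc 1 (H - 1), c i) * c H := by
      have h2 := Finset.prod_Icc_succ_top (by omega : 1 ≤ H - 1 + 1) c
      rw [hH1] at h2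
      exact h2
    rw [hp, mul_add, Finset.mul_sum]
    congr 1
    · ring
    · apply Finset.sum_congr rfl
      intro k hk
      have hk' : k ≤ H - 1 := (Finset.mem_Icc.mp hk).2
      have hp2 : (∏ i ∈ Finset.Icc (k + 1) H, c i)
          = (∏ i ∈ Finset.Icc (k + 1) (H - 1), c i) * c H := by
        have h2 := Finset.prod_Icc_succ_top (by omega : k + 1 ≤ H - 1 + 1) c
        rw [hH1] at h2
        exact h2
      rw [hp2]; ring
  calc ‖X (H + 1) - Xc (H + 1)‖ ≤ c H * ‖X H - Xc H‖ := hglob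
    _ ≤ c H * ((∏ i ∈ Finset.Icc 1 (H - 1), c i) * ‖X 1 - Xc 1‖ +
        ∑ k ∈ Finset.Icc 1 (H - 1), (1 + θ k) * σ k * ∏ i ∈ Finset.Icc (k + 1) (H - 1), c i) :=
        mul_le_mul_of_nonneg_left hmain hcH
    _ = _ := final
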